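/- Let i ≥ 1 and M ≥ 1 be integers, and let R₁, …, R_i be independent random variables, each uniformly distributed on {0, 1, …, M−1}. Then the probability that the maximum value is attained by exactly one of them is at least 1 − (i−1)/M; that is, Pr(|{v : R_v = max_u R_u}| = 1) ≥ 1 − (i−1)/M. -/

import Mathlib

open MeasureTheory ProbabilityTheory Finset
open scoped ENNReal

theorem uniform_unique_max_prob
    {Ω : Type*} [MeasurableSpace Ω] (μ : Measure Ω) [IsProbabilityMeasure μ]
    (i M : ℕ) (hi : 1 ≤ i) (hM : 1 ≤ M)
    (R : Fin i → Ω → ℕ)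
    (hmeas : ∀ v, Measurable (R v))
    (hindep : iIndepFun R μ)
    (hunif : ∀ (v : Fin i) (j : ℕ), j < M → μ {ω | R v ω = j} = (M : ℝ≥0∞)⁻¹) :
    1 - ((i : ℝ) - 1) / (M : ℝ) ≤
      (μ {ω | (univ.filter fun v => R v ω = univ.sup fun u => R u ω).card = 1}).toReal := by
  haveI : NeZero i := ⟨by omega⟩
  have hMne : (M : ℝ≥0∞) ≠ 0 := by exact_mod_cast Nat.cast_ne_zero.2 (by omega)
  -- vector map and generic measurability
  have hvec : Measurable (fun ω (u : Fin i) => R u ω) := measurable_pi_lambda _ hmeas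
  have hfun : ∀ g : (Fin i → ℕ) → ℕ, Measurable fun ω => g (fun u => R u ω) :=
    fun g => (measurable_of_countable g).comp hvec
  -- prefix sup
  set psup : Fin i → Ω → ℕ := fun v ω => (univ.filter fun u => u < v).sup fun u => R u ω
    with hpsup
  have hpsup_meas : ∀ v, Measurable (psup v) := fun v =>
    hfun (fun x => (univ.filter fun u => u < v).sup x)
  set A : Fin i → Set Ω := fun v => {ω | R v ω = psup v ω} with hA
  set G : Set Ω :=
      {ω | (univ.filter fun v => R v ω = univ.sup fun u => R u ω).card = 1} with hG
  have hGmeas : MeasurableSet G := by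
    have : G = (fun ω (u : Fin i) => R u ω) ⁻¹'
        {x | (univ.filter fun v => x v = univ.sup fun u => x u).card = 1} := rfl
    rw [this]
    exact hvec (Set.Countable.measurableSet (Set.to_countable _))
  -- independence of R v and psup v
  have hindep2 : ∀ v : Fin i, IndepFun (R v) (psup v) μ := by
    intro v
    have hdisj : Disjoint ({v} : Finset (Fin i)) (univ.filter fun u => u < v) := by
      simp [Finset.disjoint_singleton_left]
    have h := hindep.indepFun_finset {v} (univ.filter fun u => u < v) hdisj hmeas
    have h2 := h.comp (φ := fun x : ({v} : Finset (Fin i)) → ℕ => x ⟨v, mem_singleton_self v⟩)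
      (ψ := fun x : ((univ.filter fun u => u < v) : Finset (Fin i)) → ℕ => univ.sup x)
      (measurable_of_countable _) (measurable_of_countable _)
    have e1 : (fun x : ({v} : Finset (Fin i)) → ℕ => x ⟨v, mem_singleton_self v⟩) ∘
        (fun a (u : ({v} : Finset (Fin i))) => R u a) = R v := rfl
    have e2 : (fun x : ((univ.filter fun u => u < v) : Finset (Fin i)) → ℕ => univ.sup x) ∘
        (fun a (u : ((univ.filter fun u => u < v) : Finset (Fin i))) => R u a) = psup v := by
      funext ω
      simp only [Function.comp_apply, hpsup]
      rw [Finset.univ_eq_attach]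
      exact Finset.sup_attach (univ.filter fun u => u < v) (fun u => R u ω)
    rwa [e1, e2] at h2
  -- pointwise bound μ {R v = j} ≤ M⁻¹
  have hRle : ∀ (v : Fin i) (j : ℕ), μ (R v ⁻¹' {j}) ≤ (M : ℝ≥0∞)⁻¹ := by
    intro v j
    by_cases hj : j < M
    · exact le_of_eq (hunif v j hj)
    · -- measure of values ≥ M is zero
      have hsum : μ (⋃ k : Fin M, R v ⁻¹' {(k : ℕ)}) = 1 := by
        rw [measure_iUnion ?_ fun k => hmeas v (measurableSet_singleton _)]
        · have : ∀ k : Fin M, μ (R v ⁻¹' {(k : ℕ)}) = (M : ℝ≥0∞)⁻¹ :=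
            fun k => hunif v k k.2
          rw [tsum_congr this, tsum_fintype]
          simp [Finset.card_univ, nsmul_eq_mul, ENNReal.mul_inv_cancel hMne (by simp)]
        · intro a b hab
          have : (a : ℕ) ≠ b := fun h => hab (Fin.ext h)
          exact Set.disjoint_left.2 fun ω h1 h2 => this (h1.symm.trans h2)
      have hcompl : μ (⋃ k : Fin M, R v ⁻¹' {(k : ℕ)})ᶜ = 0 := by
        rw [measure_compl (MeasurableSet.iUnion fun k => hmeas v (measurableSet_singleton _))
          (measure_ne_top _ _), hsum, measure_univ, tsub_self]
      have hsub : R v ⁻¹' {j} ⊆ (⋃ k : Fin M, R v ⁻¹' {(k : ℕ)})ᶜ := by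
        intro ω hω
        simp only [Set.mem_compl_iff, Set.mem_iUnion, Set.mem_preimage,
          Set.mem_singleton_iff] at *
        rintro ⟨k, hk⟩
        exact hj (hω ▸ hk ▸ k.2)
      calc μ (R v ⁻¹' {j}) ≤ 0 := hcompl ▸ measure_mono hsub
        _ ≤ _ := zero_le
  -- bound on μ (A v)
  have hAle : ∀ v : Fin i, μ (A v) ≤ (M : ℝ≥0∞)⁻¹ := by
    intro v
    have hAeq : A v = ⋃ j : ℕ, (R v ⁻¹' {j} ∩ psup v ⁻¹' {j}) := by
      ext ω
      simp only [hA, Set.mem_setOf_eq, Set.mem_iUnion, Set.mem_inter_iff, Set.mem_preimage,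
        Set.mem_singleton_iff]
      constructor
      · intro h; exact ⟨psup v ω, h, rfl⟩
      · rintro ⟨j, h1, h2⟩; rw [h1, h2]
    have hdisj : Pairwise (Function.onFun Disjoint
        fun j : ℕ => R v ⁻¹' {j} ∩ psup v ⁻¹' {j}) := by
      intro a b hab
      exact Set.disjoint_left.2 fun ω h1 h2 => hab (h1.1.symm.trans h2.1)
    have hm : ∀ j : ℕ, MeasurableSet (R v ⁻¹' {j} ∩ psup v ⁻¹' {j}) :=
      fun j => (hmeas v (measurableSet_singleton _)).inter
        (hpsup_meas v (measurableSet_singleton _))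
    calc μ (A v) = ∑' j : ℕ, μ (R v ⁻¹' {j} ∩ psup v ⁻¹' {j}) := by
          rw [hAeq, measure_iUnion hdisj hm]
      _ = ∑' j : ℕ, μ (R v ⁻¹' {j}) * μ (psup v ⁻¹' {j}) :=
          tsum_congr fun j => (hindep2 v).measure_inter_preimage_eq_mul _ _
            (measurableSet_singleton j) (measurableSet_singleton j)
      _ ≤ ∑' j : ℕ, (M : ℝ≥0∞)⁻¹ * μ (psup v ⁻¹' {j}) :=
          ENNReal.tsum_le_tsum fun j => mul_le_mul_left (hRle v j) _
      _ = (M : ℝ≥0∞)⁻¹ * ∑' j : ℕ, μ (psup v ⁻¹' {j}) := ENNReal.tsum_mul_left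
      _ ≤ (M : ℝ≥0∞)⁻¹ * 1 := by
          refine mul_le_mul_right ?_ _
          have hd : Pairwise (Function.onFun Disjoint fun j : ℕ => psup v ⁻¹' {j}) := by
            intro a b hab
            exact Set.disjoint_left.2 fun ω h1 h2 => hab (h1.symm.trans h2)
          rw [← measure_iUnion hd fun j => hpsup_meas v (measurableSet_singleton _)]
          exact prob_le_one
      _ = (M : ℝ≥0∞)⁻¹ := mul_one _
  -- union bound over complement
  have hsubset : Gᶜ ⊆ ⋃ v ∈ univ.erase (0 : Fin i), A v := by
    intro ω hω
    simp only [hG, Set.mem_compl_iff, Set.mem_setOf_eq] at hω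
    set s := univ.filter fun v => R v ω = univ.sup fun u => R u ω with hs
    have hne : s.Nonempty := by
      obtain ⟨v, _, hv⟩ := Finset.exists_mem_eq_sup univ univ_nonempty (fun u => R u ω)
      exact ⟨v, by simp [hs, hv.symm]⟩
    have h2 : 1 < s.card := by
      have := Finset.card_pos.2 hne
      omega
    obtain ⟨a, ha, b, hb, hab⟩ := Finset.one_lt_card.1 h2
    have key : ∀ u w : Fin i, u ∈ s → w ∈ s → u < w →
        ω ∈ ⋃ v ∈ univ.erase (0 : Fin i), A v := by
      intro u w hu hw huw
      simp only [hs, mem_filter] at hu hw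
      have hwne : w ≠ 0 := by
        intro h
        exact absurd huw (by simp [h, Fin.not_lt, Fin.zero_le])
      have h1 : psup w ω ≤ univ.sup fun u => R u ω :=
        Finset.sup_mono (filter_subset _ _)
      have h2' : (univ.sup fun u => R u ω) ≤ psup w ω := by
        rw [← hu.2]
        exact Finset.le_sup (f := fun u => R u ω) (mem_filter.2 ⟨mem_univ u, huw⟩)
      refine Set.mem_biUnion (mem_erase.2 ⟨hwne, mem_univ w⟩) ?_
      simp only [hA, Set.mem_setOf_eq]
      rw [hw.2]
      exact le_antisymm h2' h1
    rcases lt_or_gt_of_ne hab with h | h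
    · exact key a b ha hb h
    · exact key b a hb ha h
  have hbad : μ Gᶜ ≤ ((i - 1 : ℕ) : ℝ≥0∞) * (M : ℝ≥0∞)⁻¹ := by
    calc μ Gᶜ ≤ μ (⋃ v ∈ univ.erase (0 : Fin i), A v) := measure_mono hsubset
      _ ≤ ∑ v ∈ univ.erase (0 : Fin i), μ (A v) := measure_biUnion_finset_le _ _
      _ ≤ ∑ _v ∈ univ.erase (0 : Fin i), (M : ℝ≥0∞)⁻¹ :=
          Finset.sum_le_sum fun v _ => hAle v
      _ = ((i - 1 : ℕ) : ℝ≥0∞) * (M : ℝ≥0∞)⁻¹ := by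
          rw [Finset.sum_const, Finset.card_erase_of_mem (mem_univ _)]
          simp [Fintype.card_fin, nsmul_eq_mul]
  -- final arithmetic
  have hRHSne : ((i - 1 : ℕ) : ℝ≥0∞) * (M : ℝ≥0∞)⁻¹ ≠ ⊤ :=
    ENNReal.mul_ne_top (ENNReal.natCast_ne_top _) (ENNReal.inv_ne_top.2 hMne)
  have hbadR : (μ Gᶜ).toReal ≤ ((i : ℝ) - 1) / (M : ℝ) := by
    have := ENNReal.toReal_mono hRHSne hbad
    rwa [ENNReal.toReal_mul, ENNReal.toReal_inv, ENNReal.toReal_natCast,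
      ENNReal.toReal_natCast, Nat.cast_sub hi, Nat.cast_one, ← div_eq_mul_inv] at this
  have hsplit : (μ G).toReal = 1 - (μ Gᶜ).toReal := by
    rw [measure_compl hGmeas (measure_ne_top _ _), measure_univ,
      ENNReal.toReal_sub_of_le prob_le_one (by simp)]
    simp
  rw [hsplit]
  linarith
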